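/- Fix γ ∈ (0,1) and μ > 0 with μ ≠ 1. Let g be a concave traveling wave with speed v, support [L,0] and phenotypic threshold s. Then v > 0; moreover if v > s then v = 1 − γ, while if v ≤ s then μ < 1 and v = (1 − γ − μ s)/(1 − μ). -/

import Mathlib

/-- `π(x) = x` if `x ≥ 0`, and `−∞` otherwise. -/
noncomputable def piE (x : EReal) : EReal := if 0 ≤ x then x else ⊥

/-- Concavity for `ℝ ∪ {−∞}`-valued functions (modeled as `ℝ → EReal`). -/
def ConcaveE (h : ℝ → EReal) : Prop :=
  ∀ x x' t : ℝ, 0 ≤ t → t ≤ 1 →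
    ((t : EReal) * h x + ((1 - t : ℝ) : EReal) * h x') ≤ h (t * x + (1 - t) * x')

/-- `Φ_ξ[g](x) = 1 − γ + sup_y ( g(y) − |x − y| ) − μ·max(ξ − x, 0)`. -/
noncomputable def Phi (γ μ : ℝ) (g : ℝ → EReal) (ξ x : ℝ) : EReal :=
  ((1 - γ : ℝ) : EReal) + (⨆ y : ℝ, g y - ((|x - y| : ℝ) : EReal))
    - ((μ * max (ξ - x) 0 : ℝ) : EReal)

/-- The phenotypic threshold `s = sup{ ξ ∈ ℝ : sup_x Φ_ξ[g](x) ≥ γ }`. -/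
noncomputable def sNext (γ μ : ℝ) (g : ℝ → EReal) : ℝ :=
  sSup {ξ : ℝ | (γ : EReal) ≤ ⨆ x : ℝ, Phi γ μ g ξ x}

/-- The deterministic dynamic: `g_n = π ∘ Φ_{s_n}[g_{n−1}]` with
`s_n = sNext γ μ g_{n−1}`. -/
noncomputable def gIter (γ μ : ℝ) (g0 : ℝ → EReal) : ℕ → ℝ → EReal
  | 0 => g0
  | n + 1 => fun x =>
      piE (Phi γ μ (gIter γ μ g0 n) (sNext γ μ (gIter γ μ g0 n)) x)

/-- A concave `g` with `sup{x : g x > 0} = 0`, `L = inf{x : g x > 0} > −∞`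
(and `g = −∞` outside `[L,0]`) is a traveling wave with speed `v` if the
dynamic has the effect of shifting `g` by `v` at every step. -/
def IsTravelingWave (γ μ : ℝ) (g : ℝ → EReal) (v L : ℝ) : Prop :=
  ConcaveE g ∧
  {x : ℝ | 0 < g x}.Nonempty ∧
  BddBelow {x : ℝ | 0 < g x} ∧
  sSup {x : ℝ | 0 < g x} = 0 ∧
  sInf {x : ℝ | 0 < g x} = L ∧
  (∀ x : ℝ, x ∉ Set.Icc L 0 → g x = ⊥) ∧
  (∀ n : ℕ, 1 ≤ n → ∀ x : ℝ, gIter γ μ g n x = g (x - n * v))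

lemma tw_piE_coe_of_nonneg {r : ℝ} (h : 0 ≤ r) : piE (r : EReal) = (r : EReal) := by
  simp [piE, EReal.coe_nonneg.2 h]

lemma tw_piE_coe_eq_bot_iff {r : ℝ} : piE (r : EReal) = ⊥ ↔ r < 0 := by
  rw [piE]
  split_ifs with h
  · have h' : (0:ℝ) ≤ r := by exact_mod_cast h
    simp [EReal.coe_ne_bot r, not_lt.2 h']
  · have h' : r < 0 := by
      by_contra h''
      exact h (by exact_mod_cast not_lt.1 h'')
    simp [h']

lemma tw_piE_eq_of_pos {t b : EReal} (h : piE t = b) (hb : 0 < b) : t = b := by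
  rw [piE] at h
  split_ifs at h with h0
  · exact h
  · rw [← h] at hb
    exact absurd hb (by simp)

lemma tw_add_coe_ne_bot {a : EReal} (ha : a ≠ ⊥) (r : ℝ) : a + (r : EReal) ≠ ⊥ := by
  induction a using EReal.rec with
  | bot => exact absurd rfl ha
  | coe p => rw [← EReal.coe_add]; exact EReal.coe_ne_bot _
  | top => simp [EReal.top_add_coe]

lemma tw_sub_nonneg_le {a : EReal} {b : ℝ} (hb : 0 ≤ b) : a - (b : EReal) ≤ a := by
  induction a using EReal.rec with
  | bot => simp [EReal.bot_sub]
  | coe p => rw [← EReal.coe_sub]; exact_mod_cast sub_le_self p hb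
  | top => simp [EReal.top_sub_coe]

lemma tw_iSup_sub_coe (f : ℝ → EReal) (r : ℝ) :
    (⨆ y, f y - (r : EReal)) = (⨆ y, f y) - (r : EReal) := by
  apply le_antisymm
  · exact iSup_le fun y => EReal.sub_le_sub (le_iSup f y) le_rfl
  · rw [EReal.sub_le_iff_le_add (Or.inl (EReal.coe_ne_bot r)) (Or.inl (EReal.coe_ne_top r))]
    refine iSup_le fun y => ?_
    calc f y = (f y - (r:EReal)) + (r:EReal) := (EReal.sub_add_cancel).symm
    _ ≤ (⨆ y, f y - (r : EReal)) + (r:EReal) := add_le_add (le_iSup (fun y => f y - (r:EReal)) y) le_rfl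

lemma tw_solve_S {r1 r2 q : ℝ} {S : EReal} (h : (r1:EReal) + S - (r2:EReal) = (q:EReal)) :
    S = ((q + r2 - r1 : ℝ) : EReal) := by
  have h1 : (r1:EReal) + S = (q:EReal) + (r2:EReal) := by
    rw [← h]; exact (EReal.sub_add_cancel).symm
  have h2 : S = ((q:EReal) + (r2:EReal)) - (r1:EReal) := by
    rw [← h1, add_comm (r1:EReal) S, EReal.add_sub_cancel_right]
  rw [h2]; norm_cast

lemma tw_concave_le {g : ℝ → EReal} (hcav : ConcaveE g) {t y u1 u2 r1 r2 q : ℝ}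
    (ht0 : 0 < t) (ht1 : t ≤ 1) (hu1 : t * y + (1 - t) * u2 = u1)
    (h1 : g u1 = (r1 : ℝ)) (h2 : g u2 = (r2 : ℝ))
    (hq : t * q + (1 - t) * r2 = r1) : g y ≤ (q : ℝ) := by
  have hc := hcav y u2 t ht0.le ht1
  rw [hu1, h1, h2] at hc
  obtain hgy | ⟨p, hgy⟩ | hgy : g y = ⊥ ∨ (∃ p : ℝ, g y = (p:EReal)) ∨ g y = ⊤ := by
    induction g y using EReal.rec with
    | bot => exact Or.inl rfl
    | coe p => exact Or.inr (Or.inl ⟨p, rfl⟩)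
    | top => exact Or.inr (Or.inr rfl)
  · rw [hgy]; exact bot_le
  · rw [hgy] at hc
    have hreal : t * p + (1 - t) * r2 ≤ r1 := by exact_mod_cast hc
    have hpq : t * p ≤ t * q := by linarith
    rw [hgy]
    exact_mod_cast le_of_mul_le_mul_left hpq ht0
  · exfalso
    rw [hgy] at hc
    rw [EReal.mul_top_of_pos (by exact_mod_cast ht0)] at hc
    rw [show ((1 - t : ℝ):EReal) * (r2:EReal) = (((1-t)*r2 : ℝ):EReal) from (EReal.coe_mul _ _).symm] at hc
    rw [EReal.top_add_coe] at hc
    exact (EReal.coe_ne_top r1) (top_le_iff.1 hc)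

lemma tw_concave_affine_global {g : ℝ → EReal} (hcav : ConcaveE g) {a b α β : ℝ} (hab : a < b)
    (heq : ∀ u ∈ Set.Ioo a b, g u = ((α + β * u : ℝ) : EReal)) :
    ∀ y, g y ≤ ((α + β * y : ℝ) : EReal) := by
  intro y
  rcases lt_or_ge y b with hyb | hyb
  · rcases lt_or_ge a y with hay | hay
    · exact le_of_eq (heq y ⟨hay, hyb⟩)
    · -- y ≤ a
      have h2m : (a+b)/2 ∈ Set.Ioo a b := ⟨by linarith, by linarith⟩
      have h1m : (3*a+b)/4 ∈ Set.Ioo a b := ⟨by linarith, by linarith⟩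
      have hd : 0 < (a+b)/2 - y := by linarith
      set t := ((a+b)/2 - (3*a+b)/4)/((a+b)/2 - y) with htdef
      have ht0 : 0 < t := div_pos (by linarith) hd
      have ht1 : t ≤ 1 := by rw [div_le_one hd]; linarith
      have hne : (a+b)/2 - y ≠ 0 := ne_of_gt hd
      have hmul : t * ((a+b)/2 - y) = (a+b)/2 - (3*a+b)/4 := by
        rw [htdef]; exact div_mul_cancel₀ _ hne
      have hu1 : t * y + (1 - t) * ((a+b)/2) = (3*a+b)/4 := by
        linear_combination (-1 : ℝ) * hmul
      exact tw_concave_le hcav ht0 ht1 hu1 (heq _ h1m) (heq _ h2m)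
        (by linear_combination β * hu1)
  · -- b ≤ y
    have h2m : (a+b)/2 ∈ Set.Ioo a b := ⟨by linarith, by linarith⟩
    have h1m : (a+3*b)/4 ∈ Set.Ioo a b := ⟨by linarith, by linarith⟩
    have hd : 0 < y - (a+b)/2 := by linarith
    set t := ((a+3*b)/4 - (a+b)/2)/(y - (a+b)/2) with htdef
    have ht0 : 0 < t := div_pos (by linarith) hd
    have ht1 : t ≤ 1 := by rw [div_le_one hd]; linarith
    have hne : y - (a+b)/2 ≠ 0 := ne_of_gt hd
    have hmul : t * (y - (a+b)/2) = (a+3*b)/4 - (a+b)/2 := by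
      rw [htdef]; exact div_mul_cancel₀ _ hne
    have hu1 : t * y + (1 - t) * ((a+b)/2) = (a+3*b)/4 := by
      linear_combination hmul
    exact tw_concave_le hcav ht0 ht1 hu1 (heq _ h1m) (heq _ h2m)
      (by linear_combination β * hu1)

set_option maxHeartbeats 2000000 in
/-- a concave traveling wave has positive speed; moreover
`v = 1 − γ` if `v > s`, while if `v ≤ s` then `μ < 1` and
`v = (1 − γ − μ s)/(1 − μ)`, where `s = sNext γ μ g` is the phenotypic
threshold. -/
theorem travelingWave_speed (γ μ : ℝ) (hγ : γ ∈ Set.Ioo (0 : ℝ) 1)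
    (hμ : 0 < μ) (hμ1 : μ ≠ 1)
    (g : ℝ → EReal) (v L : ℝ) (hg : IsTravelingWave γ μ g v L) :
    0 < v ∧
    (sNext γ μ g < v → v = 1 - γ) ∧
    (v ≤ sNext γ μ g → μ < 1 ∧ v = (1 - γ - μ * sNext γ μ g) / (1 - μ)) := by
  obtain ⟨hγ0, hγ1⟩ := hγ
  obtain ⟨hcav, hPne, hPbdd, hsup0, hinfL, hout, hwave⟩ := hg
  obtain ⟨y₀, hy₀⟩ := hPne
  have hy₀ : 0 < g y₀ := hy₀
  set s := sNext γ μ g with hsdef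
  -- the basic traveling-wave equation at n = 1
  have hE : ∀ x : ℝ, piE (Phi γ μ g s x) = g (x - v) := by
    intro x
    have h := hwave 1 le_rfl x
    simpa [gIter, ← hsdef] using h
  clear_value s
  -- membership facts
  have hmem : ∀ ⦃y : ℝ⦄, 0 < g y → L ≤ y ∧ y ≤ 0 := by
    intro y hy
    have hyIcc : y ∈ Set.Icc L 0 := by
      by_contra hcon
      rw [hout y hcon] at hy
      exact absurd hy (by simp)
    exact ⟨hyIcc.1, hyIcc.2⟩
  have hexists_gt : ∀ w : ℝ, w < 0 → ∃ y, 0 < g y ∧ w < y := by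
    intro w hw
    by_contra hcon
    push_neg at hcon
    have h1 : sSup {x : ℝ | 0 < g x} ≤ w := csSup_le ⟨y₀, hy₀⟩ fun y hy => hcon y hy
    rw [hsup0] at h1
    linarith
  have hexists_lt : ∀ w : ℝ, L < w → ∃ y, 0 < g y ∧ y < w := by
    intro w hw
    by_contra hcon
    push_neg at hcon
    have h1 : w ≤ sInf {x : ℝ | 0 < g x} := le_csInf ⟨y₀, hy₀⟩ fun y hy => hcon y hy
    rw [hinfL] at h1
    linarith
  -- interior positivity
  have hIoo : ∀ u : ℝ, L < u → u < 0 → 0 < g u := by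
    intro u hLu hu0
    obtain ⟨y1, hy1, hy1u⟩ := hexists_lt u hLu
    obtain ⟨y2, hy2, huy2⟩ := hexists_gt u hu0
    have hden : 0 < y2 - y1 := by linarith
    set t := (y2 - u) / (y2 - y1) with htdef
    have ht0 : 0 < t := div_pos (by linarith) hden
    have ht1 : t < 1 := by rw [htdef, div_lt_one hden]; linarith
    have hmul : t * (y2 - y1) = y2 - u := by
      rw [htdef]; exact div_mul_cancel₀ _ (ne_of_gt hden)
    have hu : t * y1 + (1 - t) * y2 = u := by linear_combination (-1 : ℝ) * hmul
    have hco := hcav y1 y2 t ht0.le ht1.le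
    rw [hu] at hco
    refine lt_of_lt_of_le ?_ hco
    have hz : (0:EReal) = 0 + 0 := by simp
    rw [hz]
    exact EReal.add_lt_add (EReal.mul_pos (by exact_mod_cast ht0) hy1)
      (EReal.mul_pos (by exact_mod_cast (by linarith : (0:ℝ) < 1 - t)) hy2)
  -- the sup-convolution formula on the right
  have hM : ∀ x : ℝ, 0 ≤ x →
      (⨆ y : ℝ, g y - ((|x - y| : ℝ) : EReal)) = (⨆ y : ℝ, (g y + (y : EReal))) - (x : EReal) := by
    intro x hx
    rw [← tw_iSup_sub_coe]
    refine iSup_congr fun y => ?_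
    rcases le_or_gt y 0 with hy | hy
    · have habs : |x - y| = x - y := abs_of_nonneg (by linarith)
      rw [habs]
      induction g y using EReal.rec with
      | bot => rw [EReal.bot_sub, EReal.bot_add, EReal.bot_sub]
      | coe p =>
        rw [← EReal.coe_sub, ← EReal.coe_add, ← EReal.coe_sub]
        norm_cast
        ring
      | top => rw [EReal.top_sub_coe, EReal.top_add_coe, EReal.top_sub_coe]
    · have hgb : g y = ⊥ := hout y fun h => absurd h.2 (not_le.2 hy)
      rw [hgb, EReal.bot_sub, EReal.bot_add, EReal.bot_sub]
  -- the constant c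
  have hCne_bot : (⨆ y : ℝ, (g y + (y : EReal))) ≠ ⊥ := by
    intro hbot
    have h1 : g y₀ + (y₀ : EReal) ≤ ⨆ y : ℝ, (g y + (y : EReal)) :=
      le_iSup (fun y => g y + (y : EReal)) y₀
    rw [hbot, le_bot_iff] at h1
    exact tw_add_coe_ne_bot (lt_of_le_of_lt bot_le hy₀).ne' y₀ h1
  have hCne_top : (⨆ y : ℝ, (g y + (y : EReal))) ≠ ⊤ := by
    intro htop
    set x₀ := max (max s 0) v + 1 with hx₀def
    have hx₀0 : 0 ≤ x₀ := by
      have := le_max_right s 0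
      have := le_max_left (max s 0) v
      simp only [hx₀def]
      nlinarith [le_max_right s 0, le_max_left (max s 0) v]
    have h1 := hE x₀
    rw [Phi, hM x₀ hx₀0, htop, EReal.top_sub_coe, EReal.coe_add_top, EReal.top_sub_coe] at h1
    have hpi : piE (⊤ : EReal) = ⊤ := by simp [piE]
    rw [hpi] at h1
    have hbotv : g (x₀ - v) = ⊥ := by
      refine hout _ fun h => absurd h.2 (not_le.2 ?_)
      have := le_max_right (max s 0) v
      simp only [hx₀def]
      nlinarith [le_max_right (max s 0) v]
    rw [hbotv] at h1
    exact absurd h1 (by simp)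
  obtain ⟨c, hc⟩ : ∃ c : ℝ, (⨆ y : ℝ, (g y + (y : EReal))) = (c : EReal) :=
    ⟨_, (EReal.coe_toReal hCne_top hCne_bot).symm⟩
  have hgyle : ∀ y : ℝ, g y ≤ ((c - y : ℝ) : EReal) := by
    intro y
    have h1 : g y + (y : EReal) ≤ (c : EReal) := hc ▸ le_iSup (fun y => g y + (y : EReal)) y
    rw [EReal.coe_sub]
    exact (EReal.le_sub_iff_add_le (Or.inl (EReal.coe_ne_bot y))
      (Or.inl (EReal.coe_ne_top y))).2 h1
  have hPhiR : ∀ x : ℝ, 0 ≤ x →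
      Phi γ μ g s x = (((1 - γ) + (c - x) - μ * max (s - x) 0 : ℝ) : EReal) := by
    intro x hx
    rw [Phi, hM x hx, hc, ← EReal.coe_sub, ← EReal.coe_add, ← EReal.coe_sub]
  have hc0 : 0 ≤ c := by
    by_contra hcon
    push_neg at hcon
    obtain ⟨y, hy, hcy⟩ := hexists_gt c hcon
    have h1 : g y + (y : EReal) ≤ (c : EReal) := hc ▸ le_iSup (fun y => g y + (y : EReal)) y
    have h2 : ((y : ℝ) : EReal) < g y + (y : EReal) := by
      have h3 := EReal.add_lt_add_right_coe hy y
      simpa using h3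
    have h4 : ((y : ℝ) : EReal) < (c : EReal) := h2.trans_le h1
    exact absurd (by exact_mod_cast h4) (not_lt.2 hcy.le)
  have hR : ∀ x : ℝ, s ≤ x → 0 ≤ x →
      piE (((1 - γ) + (c - x) : ℝ) : EReal) = g (x - v) := by
    intro x hsx hx0
    have h1 := hE x
    rw [hPhiR x hx0, max_eq_right (sub_nonpos.2 hsx), mul_zero, sub_zero] at h1
    exact h1
  -- the S-bounds
  have hScx : ∀ x : ℝ, (⨆ y : ℝ, g y - ((|x - y| : ℝ) : EReal)) ≤ ((c - x : ℝ) : EReal) := by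
    intro x
    refine iSup_le fun y => ?_
    have h1 : g y - ((|x - y| : ℝ) : EReal) ≤ ((c - y : ℝ) : EReal) - ((|x - y| : ℝ) : EReal) :=
      EReal.sub_le_sub (hgyle y) le_rfl
    refine h1.trans ?_
    rw [← EReal.coe_sub]
    have h2 : c - y - |x - y| ≤ c - x := by
      have := le_abs_self (x - y)
      linarith
    exact_mod_cast h2

  -- positivity of the speed
  have hv0 : 0 < v := by
    by_contra hvcon
    push_neg at hvcon
    rcases le_or_gt s 0 with hs0 | hs0
    · -- case A : s ≤ 0
      set x := (1 - γ) + c with hxdef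
      have hxpos : 0 < x := by simp only [hxdef]; linarith
      have h1 := hR x (by linarith) (by linarith)
      have h2 : (1 - γ) + (c - x) = 0 := by simp only [hxdef]; ring
      rw [h2] at h1
      rw [tw_piE_coe_of_nonneg le_rfl] at h1
      have hb : g (x - v) = ⊥ := by
        refine hout _ fun h => absurd h.2 (not_le.2 ?_)
        linarith
      rw [hb] at h1
      exact EReal.coe_ne_bot 0 h1
    · -- case B : 0 < s
      have hb1 : (1 - γ) + c - μ * s ≤ 0 := by
        by_contra hA
        push_neg at hA
        set x := min s (((1 - γ) + c - μ * s) / (1 + |μ - 1|)) with hxdef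
        have hx0 : 0 < x := lt_min hs0 (div_pos hA (by positivity))
        have hxs : x ≤ s := min_le_left _ _
        have h1 := hE x
        rw [hPhiR x hx0.le, max_eq_left (by linarith : (0:ℝ) ≤ s - x)] at h1
        have hbot : g (x - v) = ⊥ := by
          refine hout _ fun h => absurd h.2 (not_le.2 ?_)
          linarith
        rw [hbot] at h1
        have hlt := tw_piE_coe_eq_bot_iff.1 h1
        have h2 : -|μ - 1| * x ≤ (μ - 1) * x :=
          mul_le_mul_of_nonneg_right (neg_abs_le (μ - 1)) hx0.le
        have h3 : x ≤ ((1 - γ) + c - μ * s) / (1 + |μ - 1|) := min_le_right _ _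
        have h4 : x * (1 + |μ - 1|) ≤ (1 - γ) + c - μ * s :=
          (le_div_iff₀ (by positivity)).1 h3
        have h5 : 0 ≤ |μ - 1| * x := mul_nonneg (abs_nonneg _) hx0.le
        nlinarith [hlt, h2, h4, hx0]
      -- the maximum of g
      have hgamle : ∀ y : ℝ, g y ≤ ((c - L : ℝ) : EReal) := by
        intro y
        rcases le_or_gt L y with hy | hy
        · exact (hgyle y).trans (by exact_mod_cast (by linarith : c - y ≤ c - L))
        · rw [hout y fun h => absurd h.1 (not_le.2 hy)]
          exact bot_le
      have hGne_top : (⨆ y : ℝ, g y) ≠ ⊤ :=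
        ne_top_of_le_ne_top (EReal.coe_ne_top _) (iSup_le hgamle)
      have hGne_bot : (⨆ y : ℝ, g y) ≠ ⊥ := by
        intro hbot
        have h1 : g y₀ ≤ ⨆ y : ℝ, g y := le_iSup g y₀
        rw [hbot, le_bot_iff] at h1
        exact (lt_of_le_of_lt bot_le hy₀).ne' h1
      obtain ⟨gam, hgam⟩ : ∃ gam : ℝ, (⨆ y : ℝ, g y) = (gam : EReal) :=
        ⟨_, (EReal.coe_toReal hGne_top hGne_bot).symm⟩
      have hgam0 : 0 < gam := by
        have h1 : (0 : EReal) < (gam : EReal) := by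
          rw [← hgam]
          exact lt_of_lt_of_le hy₀ (le_iSup g y₀)
        exact_mod_cast h1
      have hSgam : ∀ x : ℝ, (⨆ y : ℝ, g y - ((|x - y| : ℝ) : EReal)) ≤ (gam : EReal) := by
        intro x
        refine iSup_le fun y => ?_
        exact (tw_sub_nonneg_le (abs_nonneg _)).trans ((le_iSup g y).trans hgam.le)
      rcases le_or_gt 1 μ with hmuge | hmult
      · -- μ ≥ 1 : use y₀
        have hy₀le := (hmem hy₀).2
        set x₀ := y₀ + v with hx₀def
        have hx₀le : x₀ ≤ 0 := by simp only [hx₀def]; linarith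
        have h1 := hE x₀
        rw [show x₀ - v = y₀ by simp only [hx₀def]; ring] at h1
        have heq := tw_piE_eq_of_pos h1 hy₀
        obtain ⟨p, hp⟩ : ∃ p : ℝ, g y₀ = (p : EReal) :=
          ⟨_, (EReal.coe_toReal (ne_top_of_le_ne_top (EReal.coe_ne_top _) (hgyle y₀))
            (lt_of_le_of_lt bot_le hy₀).ne').symm⟩
        have hppos : 0 < p := by
          have : (0 : EReal) < (p : EReal) := hp ▸ hy₀
          exact_mod_cast this
        rw [Phi, hp] at heq
        have hS := tw_solve_S heq
        have h2 := hScx x₀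
        rw [hS] at h2
        have h3 : p + μ * max (s - x₀) 0 - (1 - γ) ≤ c - x₀ := by exact_mod_cast h2
        rw [max_eq_left (by linarith : (0:ℝ) ≤ s - x₀)] at h3
        nlinarith [mul_nonneg (by linarith : (0:ℝ) ≤ μ - 1) (by linarith : (0:ℝ) ≤ -x₀)]
      · -- μ < 1
        have hεlt : gam - μ * gam / 2 < gam := by nlinarith
        have h1 : ((gam - μ * gam / 2 : ℝ) : EReal) < ⨆ y : ℝ, g y := by
          rw [hgam]; exact_mod_cast hεlt
        obtain ⟨y, hy⟩ := lt_iSup_iff.1 h1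
        have hgampos : (0:ℝ) < gam - μ * gam / 2 := by nlinarith
        have hgy0 : 0 < g y :=
          lt_trans (by exact_mod_cast hgampos : (0:EReal) < ((gam - μ * gam / 2 : ℝ) : EReal)) hy
        have hyle := (hmem hgy0).2
        obtain ⟨p, hp⟩ : ∃ p : ℝ, g y = (p : EReal) :=
          ⟨_, (EReal.coe_toReal (ne_top_of_le_ne_top (EReal.coe_ne_top _) (hgyle y))
            (lt_of_le_of_lt bot_le hgy0).ne').symm⟩
        have hpgt : gam - μ * gam / 2 < p := by
          rw [hp] at hy; exact_mod_cast hy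
        set x₀ := y + v with hx₀def
        have hx₀le : x₀ ≤ 0 := by simp only [hx₀def]; linarith
        have h2 := hE x₀
        rw [show x₀ - v = y by simp only [hx₀def]; ring] at h2
        have heq := tw_piE_eq_of_pos h2 hgy0
        rw [Phi, hp] at heq
        have hS := tw_solve_S heq
        have hB1 : p + μ * max (s - x₀) 0 - (1 - γ) ≤ gam := by
          have h3 := hSgam x₀
          rw [hS] at h3
          exact_mod_cast h3
        have hB2 : p + μ * max (s - x₀) 0 - (1 - γ) ≤ c - x₀ := by
          have h3 := hScx x₀
          rw [hS] at h3
          exact_mod_cast h3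
        rw [max_eq_left (by linarith : (0:ℝ) ≤ s - x₀)] at hB1 hB2
        have h5 : (1 - μ) * (p + μ * (s - x₀) - (1 - γ)) ≤ (1 - μ) * gam :=
          mul_le_mul_of_nonneg_left hB1 (by linarith)
        have h6 : μ * (p + μ * (s - x₀) - (1 - γ)) ≤ μ * (c - x₀) :=
          mul_le_mul_of_nonneg_left hB2 hμ.le
        have h7 : 0 ≤ (1 - μ) * c := mul_nonneg (by linarith) hc0
        have h8 : 0 < μ * gam := mul_pos hμ hgam0
        nlinarith [hb1, hpgt, h5, h6, h7, h8]

  -- the support has nonempty interior: L < 0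
  have hLneg : L < 0 := by
    by_contra hLcon
    push_neg at hLcon
    obtain ⟨hLy₀, hy₀0⟩ := hmem hy₀
    have hy₀eq : y₀ = 0 := le_antisymm hy₀0 (hLcon.trans hLy₀)
    have hg0 : 0 < g 0 := hy₀eq ▸ hy₀
    obtain ⟨a, ha⟩ : ∃ a : ℝ, g 0 = (a : EReal) :=
      ⟨_, (EReal.coe_toReal (ne_top_of_le_ne_top (EReal.coe_ne_top _) (hgyle 0))
        (lt_of_le_of_lt bot_le hg0).ne').symm⟩
    have hapos : 0 < a := by
      have : (0 : EReal) < (a : EReal) := ha ▸ hg0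
      exact_mod_cast this
    have h1 := hE v
    rw [sub_self, hPhiR v hv0.le, ha] at h1
    have heq := tw_piE_eq_of_pos h1 (by exact_mod_cast hapos)
    have hra : (1 - γ) + (c - v) - μ * max (s - v) 0 = a := by exact_mod_cast heq
    have h2 := hE (v + a / 2)
    rw [hPhiR (v + a / 2) (by linarith)] at h2
    have hbot : g (v + a / 2 - v) = ⊥ := by
      refine hout _ fun h => absurd h.2 (not_le.2 ?_)
      linarith
    rw [hbot] at h2
    have hneg := tw_piE_coe_eq_bot_iff.1 h2
    have hmax : μ * max (s - (v + a / 2)) 0 ≤ μ * max (s - v) 0 :=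
      mul_le_mul_of_nonneg_left (max_le_max (by linarith) le_rfl) hμ.le
    linarith [hneg, hmax, hra, hapos]
  refine ⟨hv0, ?_, ?_⟩
  · -- case s < v : v = 1 - γ
    intro hsv
    set a2 := max (max s 0) (L + v) with ha2def
    clear_value a2
    have hsa2 : s ≤ a2 := by rw [ha2def]; exact (le_max_left s 0).trans (le_max_left _ _)
    have h0a2 : 0 ≤ a2 := by rw [ha2def]; exact (le_max_right s 0).trans (le_max_left _ _)
    have hLa2 : L + v ≤ a2 := by rw [ha2def]; exact le_max_right _ _
    have ha2v : a2 < v := by rw [ha2def]; exact max_lt (max_lt hsv hv0) (by linarith)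
    have haff : ∀ u ∈ Set.Ioo (a2 - v) (0:ℝ),
        g u = (((((1 - γ) + c - v) + (-1) * u) : ℝ) : EReal) := by
      intro u hu
      obtain ⟨hu1, hu2⟩ := hu
      have hx := hR (u + v) (by linarith) (by linarith)
      rw [show u + v - v = u by ring] at hx
      have hgu : 0 < g u := hIoo u (by linarith) hu2
      have heq := tw_piE_eq_of_pos hx hgu
      rw [← heq]
      congr 1
      ring
    have hcge : (1 - γ) + c - v ≤ c := by
      have huIoo : (a2 - v) / 2 ∈ Set.Ioo (a2 - v) (0:ℝ) := ⟨by linarith, by linarith⟩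
      have h1 : g ((a2 - v) / 2) + (((a2 - v) / 2 : ℝ) : EReal) ≤ (c : EReal) :=
        hc ▸ le_iSup (fun y => g y + (y : EReal)) ((a2 - v) / 2)
      rw [haff _ huIoo, ← EReal.coe_add] at h1
      have h2 : ((1 - γ) + c - v) + (-1) * ((a2 - v) / 2) + (a2 - v) / 2 ≤ c := by
        exact_mod_cast h1
      linarith
    have hcle : c ≤ (1 - γ) + c - v := by
      have hglob := tw_concave_affine_global hcav (show a2 - v < 0 by linarith) haff
      have h1 : (⨆ y : ℝ, (g y + (y : EReal))) ≤ ((((1 - γ) + c - v) : ℝ) : EReal) := by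
        refine iSup_le fun y => ?_
        rcases le_or_gt y 0 with hy | hy
        · have h2 : g y + (y : EReal) ≤ (((((1 - γ) + c - v) + (-1) * y) : ℝ) : EReal) + (y : EReal) :=
            add_le_add (hglob y) le_rfl
          refine h2.trans ?_
          rw [← EReal.coe_add]
          exact_mod_cast (by linarith : ((1 - γ) + c - v) + (-1) * y + y ≤ (1 - γ) + c - v)
        · rw [hout y fun h => absurd h.2 (not_le.2 hy), EReal.bot_add]
          exact bot_le
      rw [hc] at h1
      exact_mod_cast h1
    linarith
  · -- case v ≤ s
    intro hvs
    have hs0 : 0 < s := lt_of_lt_of_le hv0 hvs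
    set a2 := max 0 (L + v) with ha2def
    clear_value a2
    have h0a2 : 0 ≤ a2 := by rw [ha2def]; exact le_max_left _ _
    have hLa2 : L + v ≤ a2 := by rw [ha2def]; exact le_max_right _ _
    have ha2v : a2 < v := by rw [ha2def]; exact max_lt hv0 (by linarith)
    set K : ℝ := (1 - γ) + c - μ * s - (1 - μ) * v with hKdef
    clear_value K
    have haff : ∀ u ∈ Set.Ioo (a2 - v) (0:ℝ),
        g u = (((K + (μ - 1) * u) : ℝ) : EReal) := by
      intro u hu
      obtain ⟨hu1, hu2⟩ := hu
      have hx0 : (0:ℝ) ≤ u + v := by linarith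
      have hxs : u + v ≤ s := by linarith
      have h1 := hE (u + v)
      rw [hPhiR (u + v) hx0, max_eq_left (by linarith : (0:ℝ) ≤ s - (u + v))] at h1
      rw [show u + v - v = u by ring] at h1
      have hgu : 0 < g u := hIoo u (by linarith) hu2
      have heq := tw_piE_eq_of_pos h1 hgu
      rw [← heq]
      congr 1
      simp only [hKdef]
      ring
    have hcge : K ≤ c := by
      by_contra hcon
      push_neg at hcon
      set u := max ((a2 - v) / 2) ((c - K) / (2 * μ)) with hudef
      clear_value u
      have huneg : u < 0 := by
        rw [hudef]
        exact max_lt (by linarith) (div_neg_of_neg_of_pos (by linarith) (by linarith))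
      have hugt : a2 - v < u := by
        rw [hudef]
        exact lt_of_lt_of_le (by linarith) (le_max_left _ _)
      have huIoo : u ∈ Set.Ioo (a2 - v) (0:ℝ) := ⟨hugt, huneg⟩
      have h1 : g u + ((u : ℝ) : EReal) ≤ (c : EReal) :=
        hc ▸ le_iSup (fun y => g y + (y : EReal)) u
      rw [haff _ huIoo, ← EReal.coe_add] at h1
      have h2 : K + (μ - 1) * u + u ≤ c := by exact_mod_cast h1
      have h3 : μ * ((c - K) / (2 * μ)) ≤ μ * u := by
        refine mul_le_mul_of_nonneg_left ?_ hμ.le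
        rw [hudef]
        exact le_max_right _ _
      have h4 : μ * ((c - K) / (2 * μ)) = (c - K) / 2 := by
        field_simp
      nlinarith [h2, h3, h4, hcon]
    have hcle : c ≤ K := by
      have hglob := tw_concave_affine_global hcav (show a2 - v < 0 by linarith) haff
      have h1 : (⨆ y : ℝ, (g y + (y : EReal))) ≤ ((K : ℝ) : EReal) := by
        refine iSup_le fun y => ?_
        rcases le_or_gt y 0 with hy | hy
        · have h2 : g y + (y : EReal) ≤ (((K + (μ - 1) * y) : ℝ) : EReal) + (y : EReal) :=
            add_le_add (hglob y) le_rfl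
          refine h2.trans ?_
          rw [← EReal.coe_add]
          have h3 : K + (μ - 1) * y + y ≤ K := by nlinarith [mul_nonpos_of_nonneg_of_nonpos hμ.le hy]
          exact_mod_cast h3
        · rw [hout y fun h => absurd h.2 (not_le.2 hy), EReal.bot_add]
          exact bot_le
      rw [hc] at h1
      exact_mod_cast h1
    have hck : c = K := le_antisymm hcle hcge
    have hrel : (1 - μ) * v = (1 - γ) - μ * s := by
      simp only [hKdef] at hck
      linarith
    have hstar : (1 - γ) + c ≤ s := by
      by_contra hcon
      push_neg at hcon
      set x := (1 - γ) + c with hxdef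
      have h1 := hR x hcon.le (by linarith)
      have h2 : (1 - γ) + (c - x) = 0 := by simp only [hxdef]; ring
      rw [h2, tw_piE_coe_of_nonneg le_rfl] at h1
      have hb : g (x - v) = ⊥ := by
        refine hout _ fun h => absurd h.2 (not_le.2 ?_)
        linarith
      rw [hb] at h1
      exact EReal.coe_ne_bot 0 h1
    have hmult : μ < 1 := by
      rcases lt_trichotomy μ 1 with h | h | h
      · exact h
      · exact absurd h hμ1
      · exfalso
        have huIoo : (a2 - v) / 2 ∈ Set.Ioo (a2 - v) (0:ℝ) := ⟨by linarith, by linarith⟩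
        have hgu : 0 < g ((a2 - v) / 2) := hIoo _ (by linarith) (by linarith)
        rw [haff _ huIoo] at hgu
        have h2 : 0 < K + (μ - 1) * ((a2 - v) / 2) := by exact_mod_cast hgu
        nlinarith [hstar, hrel, hck, mul_nonneg (by linarith : (0:ℝ) ≤ μ - 1) (by linarith : (0:ℝ) ≤ s - v),
          mul_pos (by linarith : (0:ℝ) < μ - 1) (by linarith : (0:ℝ) < -((a2 - v) / 2))]
    refine ⟨hmult, ?_⟩
    rw [eq_div_iff (by linarith : (1:ℝ) - μ ≠ 0)]
    linarith
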